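/- Let G be a finite simple graph on n ≥ 1 vertices with average degree at most β ≥ 1 and no isolated vertices assumed removed (so we only assume average degree at most β). Fix 0 < ε < β, t ≥ 1, and set Δ = ((β+1)/ε + 1)·β. Let V_low be the vertices of degree less than Δ and G_low = G[V_low]. If IS_t is an independent set of G_low whose size is at least 1/t times the maximum independent set size of G_low, then IS_t is an independent set of G whose size is at least 1/(t(1+ε)) times the maximum independent set size of G. -/

import Mathlib

open Finset SimpleGraph

/-- Caro–Wei: in any finite set `A`, there is a subset `W` independent in `G` with
`∑_{v ∈ A} 1/(d_A(v)+1) ≤ |W|`, where `d_A(v) = |A ∩ N(v)|`. -/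
lemma caroWei {V : Type*} [Fintype V] [DecidableEq V] (G : SimpleGraph V)
    [DecidableRel G.Adj] (A : Finset V) :
    ∃ W : Finset V, W ⊆ A ∧ (∀ u ∈ W, ∀ v ∈ W, ¬ G.Adj u v) ∧
      ∑ v ∈ A, (1 : ℝ) / (((A ∩ G.neighborFinset v).card : ℝ) + 1) ≤ (W.card : ℝ) := by
  induction A using Finset.strongInduction with
  | _ A ih =>
    rcases A.eq_empty_or_nonempty with rfl | hA
    · exact ⟨∅, by simp⟩
    · obtain ⟨v, hvA, hmin⟩ := A.exists_min_image
        (fun u => (A ∩ G.neighborFinset u).card) hA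
      set d : ℕ := (A ∩ G.neighborFinset v).card with hd
      set R : Finset V := insert v (A ∩ G.neighborFinset v) with hR
      have hvnotin : v ∉ A ∩ G.neighborFinset v := by
        simp [SimpleGraph.irrefl]
      have hRcard : R.card = d + 1 := by
        rw [hR, Finset.card_insert_of_notMem hvnotin]
      have hRsub : R ⊆ A := by
        rw [hR]
        exact Finset.insert_subset hvA (Finset.inter_subset_left)
      set A' : Finset V := A \ R with hA'
      have hA'ss : A' ⊂ A := by
        refine Finset.ssubset_iff_of_subset (Finset.sdiff_subset) |>.2 ⟨v, hvA, ?_⟩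
        simp [hA', hR]
      obtain ⟨W', hW'sub, hW'ind, hW'sum⟩ := ih A' hA'ss
      have hvA' : v ∉ A' := by simp [hA', hR]
      have hvW' : v ∉ W' := fun h => hvA' (hW'sub h)
      refine ⟨insert v W', ?_, ?_, ?_⟩
      · exact Finset.insert_subset hvA (hW'sub.trans Finset.sdiff_subset)
      · -- independence
        have hnoadj : ∀ u ∈ A', ¬ G.Adj v u := by
          intro u hu hadj
          have : u ∈ R := by
            rw [hR]
            exact Finset.mem_insert_of_mem (Finset.mem_inter.2
              ⟨(Finset.mem_sdiff.1 hu).1, by simpa using hadj⟩)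
          exact (Finset.mem_sdiff.1 hu).2 this
        intro u hu w hw hadj
        rcases Finset.mem_insert.1 hu with hu1 | hu1 <;>
          rcases Finset.mem_insert.1 hw with hw1 | hw1
        · rw [hu1, hw1] at hadj; exact G.irrefl hadj
        · rw [hu1] at hadj; exact hnoadj w (hW'sub hw1) hadj
        · rw [hw1] at hadj; exact hnoadj u (hW'sub hu1) hadj.symm
        · exact hW'ind u hu1 w hw1 hadj
      · -- the sum bound
        have hsplit : ∑ u ∈ A, (1 : ℝ) / (((A ∩ G.neighborFinset u).card : ℝ) + 1)
            = ∑ u ∈ A', (1 : ℝ) / (((A ∩ G.neighborFinset u).card : ℝ) + 1)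
              + ∑ u ∈ R, (1 : ℝ) / (((A ∩ G.neighborFinset u).card : ℝ) + 1) := by
          rw [hA', Finset.sum_sdiff hRsub]
        have h1 : ∑ u ∈ A', (1 : ℝ) / (((A ∩ G.neighborFinset u).card : ℝ) + 1)
            ≤ ∑ u ∈ A', (1 : ℝ) / (((A' ∩ G.neighborFinset u).card : ℝ) + 1) := by
          refine Finset.sum_le_sum fun u hu => ?_
          have hle : (A' ∩ G.neighborFinset u).card ≤ (A ∩ G.neighborFinset u).card :=
            Finset.card_le_card (Finset.inter_subset_inter (Finset.sdiff_subset) le_rfl)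
          apply one_div_le_one_div_of_le
          · positivity
          · push_cast; linarith [(Nat.cast_le (α := ℝ)).2 hle]
        have h2 : ∑ u ∈ R, (1 : ℝ) / (((A ∩ G.neighborFinset u).card : ℝ) + 1) ≤ 1 := by
          have : ∀ u ∈ R, (1 : ℝ) / (((A ∩ G.neighborFinset u).card : ℝ) + 1)
              ≤ 1 / ((d : ℝ) + 1) := by
            intro u hu
            have hmin' : d ≤ (A ∩ G.neighborFinset u).card := hmin u (hRsub hu)
            apply one_div_le_one_div_of_le
            · positivity
            · push_cast; linarith [(Nat.cast_le (α := ℝ)).2 hmin']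
          calc ∑ u ∈ R, (1 : ℝ) / (((A ∩ G.neighborFinset u).card : ℝ) + 1)
              ≤ ∑ _u ∈ R, 1 / ((d : ℝ) + 1) := Finset.sum_le_sum this
            _ = (R.card : ℝ) / ((d : ℝ) + 1) := by
                rw [Finset.sum_const]; ring
            _ = 1 := by
                rw [hRcard]; push_cast; field_simp
        have hcard : ((insert v W').card : ℝ) = (W'.card : ℝ) + 1 := by
          rw [Finset.card_insert_of_notMem hvW']; push_cast; ring
        rw [hsplit, hcard]
        linarith

set_option maxHeartbeats 1600000 in
theorem stmt_7 {V : Type*} [Fintype V] [DecidableEq V] [Nonempty V]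
    (G : SimpleGraph V) [DecidableRel G.Adj]
    (β ε t Δ : ℝ) (hβ : 1 ≤ β) (hε0 : 0 < ε) (hεβ : ε < β) (ht : 1 ≤ t)
    (hΔ : Δ = ((β + 1) / ε + 1) * β)
    (havg : 2 * (G.edgeFinset.card : ℝ) ≤ β * (Fintype.card V : ℝ))
    (Vlow : Finset V) (hlow : Vlow = Finset.univ.filter fun v => (G.degree v : ℝ) < Δ)
    -- IS_t is a t-approximate maximum independent set of G_low = G[V_low]
    (ISt : Finset V) (hISsub : ISt ⊆ Vlow)
    (hISindep : ∀ u ∈ ISt, ∀ v ∈ ISt, ¬ G.Adj u v)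
    (hISapx : ∀ S : Finset V, S ⊆ Vlow → (∀ u ∈ S, ∀ v ∈ S, ¬ G.Adj u v) →
      (S.card : ℝ) ≤ t * (ISt.card : ℝ)) :
    (∀ u ∈ ISt, ∀ v ∈ ISt, ¬ G.Adj u v) ∧
    (∀ S : Finset V, (∀ u ∈ S, ∀ v ∈ S, ¬ G.Adj u v) →
      (S.card : ℝ) ≤ t * (1 + ε) * (ISt.card : ℝ)) := by
  refine ⟨hISindep, ?_⟩
  set Vhigh : Finset V := Finset.univ \ Vlow with hVhigh
  have hΔ' : ε * Δ = (β + 1 + ε) * β := by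
    rw [hΔ]; field_simp
  have hhigh : ∀ v ∈ Vhigh, Δ ≤ (G.degree v : ℝ) := by
    intro v hv
    have : v ∉ Vlow := (Finset.mem_sdiff.1 hv).2
    rw [hlow] at this
    simpa using this
  -- degree sum facts
  have hdegsum : ∑ v, (G.degree v : ℝ) = 2 * (G.edgeFinset.card : ℝ) := by
    rw [← Nat.cast_sum]
    norm_cast
    exact G.sum_degrees_eq_twice_card_edges
  have hsplitdeg : ∑ v ∈ Vlow, (G.degree v : ℝ) + ∑ v ∈ Vhigh, (G.degree v : ℝ)
      = ∑ v, (G.degree v : ℝ) := by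
    rw [hVhigh, add_comm]
    exact Finset.sum_sdiff (Finset.subset_univ Vlow)
  set n : ℝ := (Fintype.card V : ℝ) with hn
  set L : ℝ := (Vlow.card : ℝ) with hL
  set x : ℝ := (Vhigh.card : ℝ) with hx
  have hnLx : n = L + x := by
    have h : (Finset.univ \ Vlow).card + Vlow.card = Fintype.card V := by
      rw [Finset.card_sdiff_add_card_eq_card (Finset.subset_univ Vlow), Finset.card_univ]
    rw [hn, hL, hx, hVhigh]
    exact_mod_cast (by omega : Fintype.card V = Vlow.card + (Finset.univ \ Vlow).card)
  have hx0 : 0 ≤ x := by positivity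
  have hxΔ : x * Δ ≤ ∑ v ∈ Vhigh, (G.degree v : ℝ) := by
    calc x * Δ = ∑ _v ∈ Vhigh, Δ := by rw [Finset.sum_const, hx]; ring
      _ ≤ ∑ v ∈ Vhigh, (G.degree v : ℝ) := Finset.sum_le_sum hhigh
  -- Vlow is nonempty
  have hL1 : 1 ≤ L := by
    have hn1 : 1 ≤ n := by
      rw [hn]; exact_mod_cast Fintype.card_pos
    by_contra hc
    have hL0 : L = 0 := by
      have : Vlow.card = 0 := by
        by_contra h
        exact hc (by rw [hL]; exact_mod_cast Nat.one_le_iff_ne_zero.2 h)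
      rw [hL, this]; norm_num
    have hxn : x = n := by linarith [hnLx]
    have h1 : n * Δ ≤ β * n := by
      calc n * Δ = x * Δ := by rw [hxn]
        _ ≤ ∑ v ∈ Vhigh, (G.degree v : ℝ) := hxΔ
        _ ≤ ∑ v, (G.degree v : ℝ) := by
            have h0 : (0:ℝ) ≤ ∑ v ∈ Vlow, (G.degree v : ℝ) :=
              Finset.sum_nonneg fun v _ => by positivity
            linarith [hsplitdeg]
        _ ≤ β * n := by rw [hdegsum]; exact havg
    have hΔβ : Δ ≤ β := by
      have hnpos : (0:ℝ) < n := by linarith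
      exact (mul_le_mul_iff_of_pos_right hnpos).1 (by linarith : Δ * n ≤ β * n)
    nlinarith [hΔ', hε0, hβ]
  -- Caro-Wei independent set in Vlow
  obtain ⟨W, hWsub, hWind, hWsum⟩ := caroWei G Vlow
  set Sd : ℝ := ∑ v ∈ Vlow, ((Vlow ∩ G.neighborFinset v).card : ℝ) with hSd
  have hSd0 : 0 ≤ Sd := Finset.sum_nonneg fun v _ => by positivity
  have hCS : L ^ 2 / (Sd + L) ≤ (W.card : ℝ) := by
    have h := sq_sum_div_le_sum_sq_div Vlow (fun _ => (1:ℝ))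
      (g := fun v => ((Vlow ∩ G.neighborFinset v).card : ℝ) + 1)
      (fun v _ => by positivity)
    simp only [Finset.sum_const, nsmul_eq_mul, mul_one, one_pow] at h
    have heq : ∑ v ∈ Vlow, (((Vlow ∩ G.neighborFinset v).card : ℝ) + 1) = Sd + L := by
      rw [Finset.sum_add_distrib, Finset.sum_const, hSd, hL, nsmul_eq_mul, mul_one]
    rw [heq] at h
    calc L ^ 2 / (Sd + L) = (Vlow.card : ℝ) ^ 2 / (Sd + L) := by rw [hL]
      _ ≤ ∑ v ∈ Vlow, 1 / (((Vlow ∩ G.neighborFinset v).card : ℝ) + 1) := h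
      _ ≤ (W.card : ℝ) := hWsum
  have hden : 0 < Sd + L := by linarith
  have hW2 : L ^ 2 ≤ (W.card : ℝ) * (Sd + L) := by
    rw [div_le_iff₀ hden] at hCS; linarith
  -- Sd is at most β n - x Δ
  have hSdle : Sd ≤ β * n - x * Δ := by
    have h1 : Sd ≤ ∑ v ∈ Vlow, (G.degree v : ℝ) := by
      refine Finset.sum_le_sum fun v _ => ?_
      have : (Vlow ∩ G.neighborFinset v).card ≤ (G.neighborFinset v).card :=
        Finset.card_le_card Finset.inter_subset_right
      rw [SimpleGraph.card_neighborFinset_eq_degree] at this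
      exact_mod_cast this
    have h2 : ∑ v ∈ Vlow, (G.degree v : ℝ) ≤ β * n - x * Δ := by
      have := hsplitdeg
      rw [hdegsum] at this
      linarith [hxΔ, havg]
    linarith
  -- key inequality : x ≤ ε * W.card
  have hkey : x * (Sd + L) ≤ ε * L ^ 2 := by
    have h1 : x * (Sd + L) ≤ x * (β * (L + x) - x * Δ + L) := by
      apply mul_le_mul_of_nonneg_left _ hx0
      rw [← hnLx]; linarith
    have hq : (0:ℝ) ≤ (3*β^2+2*β-1) * (ε^2 * L^2) := by
      have h1 : (0:ℝ) ≤ 3*β^2+2*β-1 := by nlinarith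
      positivity
    have h4 : (0:ℝ) < 4*(β^2+β) := by nlinarith
    have hP : (0:ℝ) ≤ ε^2*L^2 - ε*(β+1)*x*L + (β^2+β)*x^2 := by
      have h0 : (0:ℝ) ≤ 4*(β^2+β)*(ε^2*L^2 - ε*(β+1)*x*L + (β^2+β)*x^2) := by
        have hid : 4*(β^2+β)*(ε^2*L^2 - ε*(β+1)*x*L + (β^2+β)*x^2)
            = (2*(β^2+β)*x - ε*(β+1)*L)^2 + (3*β^2+2*β-1)*(ε^2*L^2) := by ring
        rw [hid]
        exact add_nonneg (sq_nonneg _) hq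
      exact le_of_mul_le_mul_left (by linarith) h4
    have h2ε : ε * (x * (β * (L + x) - x * Δ + L)) ≤ ε * (ε * L ^ 2) := by
      nlinarith [hP, hΔ', sq_nonneg x]
    have h2 : x * (β * (L + x) - x * Δ + L) ≤ ε * L ^ 2 :=
      le_of_mul_le_mul_left h2ε hε0
    linarith
  have hxW : x ≤ ε * (W.card : ℝ) := by
    have h3 : x * (Sd + L) ≤ ε * ((W.card : ℝ) * (Sd + L)) := by
      calc x * (Sd + L) ≤ ε * L ^ 2 := hkey
        _ ≤ ε * ((W.card : ℝ) * (Sd + L)) := by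
            exact mul_le_mul_of_nonneg_left hW2 hε0.le
    rw [← mul_assoc] at h3
    exact le_of_mul_le_mul_right (by linarith) hden
  have hWt : (W.card : ℝ) ≤ t * (ISt.card : ℝ) := hISapx W hWsub hWind
  have hxfinal : x ≤ ε * (t * (ISt.card : ℝ)) := by
    calc x ≤ ε * (W.card : ℝ) := hxW
      _ ≤ ε * (t * (ISt.card : ℝ)) := mul_le_mul_of_nonneg_left hWt hε0.le
  -- conclude
  intro S hSind
  have hsub : S ⊆ (S ∩ Vlow) ∪ Vhigh := by
    intro v hv
    by_cases h : v ∈ Vlow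
    · exact Finset.mem_union_left _ (Finset.mem_inter.2 ⟨hv, h⟩)
    · exact Finset.mem_union_right _ (Finset.mem_sdiff.2 ⟨Finset.mem_univ v, h⟩)
  have hcard : (S.card : ℝ) ≤ ((S ∩ Vlow).card : ℝ) + x := by
    have := (Finset.card_le_card hsub).trans (Finset.card_union_le _ _)
    rw [hx]; exact_mod_cast this
  have hSlow : ((S ∩ Vlow).card : ℝ) ≤ t * (ISt.card : ℝ) :=
    hISapx (S ∩ Vlow) Finset.inter_subset_right
      (fun u hu v hv => hSind u (Finset.mem_inter.1 hu).1 v (Finset.mem_inter.1 hv).1)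
  calc (S.card : ℝ) ≤ ((S ∩ Vlow).card : ℝ) + x := hcard
    _ ≤ t * (ISt.card : ℝ) + ε * (t * (ISt.card : ℝ)) := by linarith
    _ = t * (1 + ε) * (ISt.card : ℝ) := by ring
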